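/- Let K be a field, A_1,...,A_n finite subsets of K with d_i = |A_i|, 2 ≤ d_i ≤ d_{i+1} for all i, and let d ≥ 1 be an integer with d = Σ_{i=1}^{k}(d_i − 1) + ℓ, 0 ≤ k ≤ n−1, 1 ≤ ℓ ≤ d_{k+1} − 1. Then for every polynomial F ∈ K[t_1,...,t_n] of total degree at most d which does not vanish identically on X* = A_1 × ... × A_n, the number of zeros of F in X* is at most d_1 ⋯ d_n − d_{k+1} ⋯ d_n + ℓ d_{k+2} ⋯ d_n. -/

import Mathlib

open Finset Polynomial

set_option linter.unusedSectionVars false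


lemma AF_P1 {n : ℕ} (y : Fin n → ℕ) (hy : ∀ i, 1 ≤ y i) :
    ∑ i, y i + 1 ≤ ∏ i, y i + n := by
  induction n with
  | zero => simp
  | succ m ih =>
    rw [Fin.sum_univ_succ, Fin.prod_univ_succ]
    have h1 := ih (fun j => y j.succ) (fun j => hy _)
    have h2 := hy 0
    have h3 : 1 ≤ ∏ j : Fin m, y j.succ := Finset.one_le_prod' fun j _ => hy _
    nlinarith

lemma AF_P2 {n : ℕ} (d y : Fin n → ℤ) (m : ℤ)
    (h0 : ∀ i, 0 ≤ y i) (h1 : ∀ i, y i ≤ d i) (h2 : ∀ i, m ≤ d i) :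
    (m - ∑ i, (d i - y i)) * ∏ i, d i ≤ m * ∏ i, y i := by
  induction n with
  | zero => simp
  | succ t ih =>
    rw [Fin.sum_univ_succ, Fin.prod_univ_succ, Fin.prod_univ_succ]
    have ih' := ih (fun j => d j.succ) (fun j => y j.succ) (fun j => h0 _) (fun j => h1 _)
      (fun j => h2 _)
    have hP : (0:ℤ) ≤ ∏ j : Fin t, d j.succ :=
      Finset.prod_nonneg fun j _ => le_trans (h0 _) (h1 _)
    have hS : (0:ℤ) ≤ ∑ j : Fin t, (d j.succ - y j.succ) :=
      Finset.sum_nonneg fun j _ => sub_nonneg.2 (h1 _)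
    have key : 0 ≤ (d 0 - y 0) * ((d 0 - m) + ∑ j : Fin t, (d j.succ - y j.succ)) *
        ∏ j : Fin t, d j.succ := by
      apply mul_nonneg (mul_nonneg (sub_nonneg.2 (h1 0)) _) hP
      have := h2 0
      linarith
    have hy0 : 0 ≤ y 0 := h0 0
    nlinarith [mul_le_mul_of_nonneg_left ih' hy0]

lemma AF_sum_split {m k : ℕ} (hk : k < m) (X : Fin m → ℕ) :
    ∑ j : Fin m, (if k ≤ (j:ℕ) then X j else 0)
      = X ⟨k, hk⟩ + ∑ j : Fin m, (if k < (j:ℕ) then X j else 0) := by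
  have h : ∀ j : Fin m, (if k ≤ (j:ℕ) then X j else 0)
      = (if j = ⟨k, hk⟩ then X j else 0) + (if k < (j:ℕ) then X j else 0) := by
    intro j
    rcases eq_or_ne j ⟨k, hk⟩ with rfl | hne
    · simp
    · have hval : (j:ℕ) ≠ k := by simpa [Fin.ext_iff] using hne
      rw [if_neg hne, zero_add]
      exact if_congr (by omega) rfl rfl
  rw [Finset.sum_congr rfl (fun j _ => h j), Finset.sum_add_distrib,
    Finset.sum_ite_eq' Finset.univ ⟨k, hk⟩ X, if_pos (Finset.mem_univ _)]

lemma AF_prod_split {m k : ℕ} (hk : k < m) (X : Fin m → ℕ) :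
    ∏ j : Fin m, (if k ≤ (j:ℕ) then X j else 1)
      = X ⟨k, hk⟩ * ∏ j : Fin m, (if k < (j:ℕ) then X j else 1) := by
  have h : ∀ j : Fin m, (if k ≤ (j:ℕ) then X j else 1)
      = (if j = ⟨k, hk⟩ then X j else 1) * (if k < (j:ℕ) then X j else 1) := by
    intro j
    rcases eq_or_ne j ⟨k, hk⟩ with rfl | hne
    · simp
    · have hval : (j:ℕ) ≠ k := by simpa [Fin.ext_iff] using hne
      rw [if_neg hne, one_mul]
      exact if_congr (by omega) rfl rfl
  rw [Finset.prod_congr rfl (fun j _ => h j), Finset.prod_mul_distrib,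
    Finset.prod_ite_eq' Finset.univ ⟨k, hk⟩ X, if_pos (Finset.mem_univ _)]

set_option maxHeartbeats 1600000 in
lemma AF_MIN : ∀ (n : ℕ) (dd y : Fin n → ℕ) (k c : ℕ) (hk : k < n),
    (∀ i j : Fin n, i ≤ j → dd i ≤ dd j) →
    (∀ i, 1 ≤ y i) → (∀ i, y i ≤ dd i) →
    1 ≤ c → c ≤ dd ⟨k, hk⟩ →
    k + c + ∑ i : Fin n, (if k < (i:ℕ) then dd i else 0) ≤ ∑ i, y i →
    c * ∏ i : Fin n, (if k < (i:ℕ) then dd i else 1) ≤ ∏ i, y i := by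
  intro n
  induction n with
  | zero => intro dd y k c hk _ _ _ _ _ _; exact absurd hk (Nat.not_lt_zero k)
  | succ m ih =>
    intro dd y k c hk hsort hy1 hy2 hc1 hc2 hsum
    have IH : ∀ (k' c' : ℕ) (hk' : k' < m), 1 ≤ c' → c' ≤ dd (Fin.succ ⟨k', hk'⟩) →
        (k' + c' + ∑ j : Fin m, (if k' < (j:ℕ) then dd j.succ else 0)
          ≤ ∑ j : Fin m, y j.succ) →
        c' * ∏ j : Fin m, (if k' < (j:ℕ) then dd j.succ else 1) ≤ ∏ j : Fin m, y j.succ := by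
      intro k' c' hk' h1 h2 h3
      exact ih (fun j => dd j.succ) (fun j => y j.succ) k' c' hk'
        (fun i j hij => hsort i.succ j.succ (Fin.succ_le_succ_iff.2 hij))
        (fun j => hy1 _) (fun j => hy2 _) h1 h2 h3
    have e1 : ∑ i : Fin (m+1), (if k < (i:ℕ) then dd i else 0)
        = ∑ j : Fin m, (if k ≤ (j:ℕ) then dd j.succ else 0) := by
      rw [Fin.sum_univ_succ]
      simp only [Fin.val_zero, Fin.val_succ]
      simp only [Nat.not_lt_zero, ↓reduceIte, zero_add]
      exact Finset.sum_congr rfl fun j _ => by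
        rw [if_congr (by omega : (k < (j:ℕ)+1) ↔ k ≤ (j:ℕ)) rfl rfl]
    have e2 : ∏ i : Fin (m+1), (if k < (i:ℕ) then dd i else 1)
        = ∏ j : Fin m, (if k ≤ (j:ℕ) then dd j.succ else 1) := by
      rw [Fin.prod_univ_succ]
      simp only [Fin.val_zero, Fin.val_succ]
      simp only [Nat.not_lt_zero, ↓reduceIte, one_mul]
      exact Finset.prod_congr rfl fun j _ => by
        rw [if_congr (by omega : (k < (j:ℕ)+1) ↔ k ≤ (j:ℕ)) rfl rfl]
    by_cases hkm : k = m
    · -- k is the last index: use P1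
      have hite0 : ∀ i : Fin (m+1), (if k < (i:ℕ) then dd i else 0) = 0 :=
        fun i => if_neg (by have := i.isLt; omega)
      have hite1 : ∀ i : Fin (m+1), (if k < (i:ℕ) then dd i else 1) = 1 :=
        fun i => if_neg (by have := i.isLt; omega)
      rw [Finset.sum_congr rfl fun i _ => hite0 i, Finset.sum_const_zero] at hsum
      rw [Finset.prod_congr rfl fun i _ => hite1 i, Finset.prod_const_one, mul_one]
      have := AF_P1 y hy1
      omega
    have hkm' : k < m := by omega
    rcases Nat.eq_zero_or_pos k with hk0 | hkpos
    · -- k = 0 : P2 route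
      subst hk0
      have e1' : ∑ j : Fin m, (if 0 ≤ (j:ℕ) then dd j.succ else 0) = ∑ j : Fin m, dd j.succ :=
        Finset.sum_congr rfl fun j _ => if_pos (Nat.zero_le _)
      have e2' : ∏ j : Fin m, (if 0 ≤ (j:ℕ) then dd j.succ else 1) = ∏ j : Fin m, dd j.succ :=
        Finset.prod_congr rfl fun j _ => if_pos (Nat.zero_le _)
      rw [e1, e1', Fin.sum_univ_succ] at hsum
      rw [e2, e2', Fin.prod_univ_succ]
      have hc2' : c ≤ dd 0 := by
        have h0 : (⟨0, hk⟩ : Fin (m+1)) = 0 := rfl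
        rwa [h0] at hc2
      have hP2 := AF_P2 (fun j => ((dd j.succ : ℕ) : ℤ)) (fun j => ((y j.succ : ℕ) : ℤ))
        ((dd 0 : ℕ) : ℤ)
        (fun j => by show (0:ℤ) ≤ ((y j.succ : ℕ):ℤ); positivity)
        (fun j => by show ((y j.succ : ℕ):ℤ) ≤ ((dd j.succ : ℕ):ℤ); exact_mod_cast hy2 j.succ)
        (fun j => by
          show ((dd 0 : ℕ):ℤ) ≤ ((dd j.succ : ℕ):ℤ)
          exact_mod_cast hsort 0 j.succ (Fin.zero_le _))
      have hsum' : (c:ℤ) + ∑ j : Fin m, ((dd j.succ : ℕ) : ℤ)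
          ≤ (y 0 : ℤ) + ∑ j : Fin m, ((y j.succ : ℕ) : ℤ) := by
        have h' : c + ∑ j : Fin m, dd j.succ ≤ y 0 + ∑ j : Fin m, y j.succ := by omega
        exact_mod_cast h'
      have hSsub : ∑ j : Fin m, (((dd j.succ : ℕ):ℤ) - ((y j.succ : ℕ):ℤ))
          = ∑ j : Fin m, ((dd j.succ:ℕ):ℤ) - ∑ j : Fin m, ((y j.succ:ℕ):ℤ) :=
        Finset.sum_sub_distrib _ _
      have hS0 : (0:ℤ) ≤ ∑ j : Fin m, (((dd j.succ :ℕ):ℤ) - ((y j.succ:ℕ):ℤ)) :=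
        Finset.sum_nonneg fun j _ => by
          have := hy2 j.succ
          simp only [sub_nonneg]
          exact_mod_cast this
      have hPd0 : (0:ℤ) ≤ ∏ j : Fin m, ((dd j.succ : ℕ):ℤ) :=
        Finset.prod_nonneg fun j _ => by positivity
      have goalZ : (c:ℤ) * ∏ j : Fin m, ((dd j.succ:ℕ):ℤ)
          ≤ (y 0 : ℤ) * ∏ j : Fin m, ((y j.succ:ℕ):ℤ) := by
        have hy00 : (0:ℤ) ≤ (y 0 : ℤ) := by positivity
        have hydd : (y 0 : ℤ) ≤ ((dd 0 : ℕ) : ℤ) := by exact_mod_cast hy2 0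
        have hcy : (c : ℤ) ≤ (y 0 : ℤ) := by
          rw [hSsub] at hS0; linarith
        have hdd0pos : (0:ℤ) < ((dd 0:ℕ) : ℤ) := by
          have h1 : (1:ℤ) ≤ (c:ℤ) := by exact_mod_cast hc1
          linarith
        have h2' := mul_le_mul_of_nonneg_left hP2 hy00
        have hscalar : (c:ℤ) * ((dd 0:ℕ):ℤ) ≤ (y 0:ℤ) * (((dd 0:ℕ):ℤ) -
            ∑ j : Fin m, (((dd j.succ:ℕ):ℤ) - ((y j.succ:ℕ):ℤ))) := by
          rw [hSsub]
          nlinarith [mul_nonneg (sub_nonneg.2 hcy) (sub_nonneg.2 hydd)]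
        have h3 := mul_le_mul_of_nonneg_right hscalar hPd0
        nlinarith [h2', h3, hdd0pos]
      exact_mod_cast goalZ
    · -- 1 ≤ k < m : peel first coordinate
      rw [e1, Fin.sum_univ_succ] at hsum
      rw [e2, Fin.prod_univ_succ]
      by_cases hyc : y 0 ≤ c
      · -- small y 0 : tail level k-1
        have hk1m : k - 1 < m := by omega
        have e3 : ∑ j : Fin m, (if k ≤ (j:ℕ) then dd j.succ else 0)
            = ∑ j : Fin m, (if k - 1 < (j:ℕ) then dd j.succ else 0) :=
          Finset.sum_congr rfl fun j _ => by
            rw [if_congr (by omega : (k ≤ (j:ℕ)) ↔ (k - 1 < (j:ℕ))) rfl rfl]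
        have e4 : ∏ j : Fin m, (if k ≤ (j:ℕ) then dd j.succ else 1)
            = ∏ j : Fin m, (if k - 1 < (j:ℕ) then dd j.succ else 1) :=
          Finset.prod_congr rfl fun j _ => by
            rw [if_congr (by omega : (k ≤ (j:ℕ)) ↔ (k - 1 < (j:ℕ))) rfl rfl]
        have hsucc : (⟨k-1, hk1m⟩ : Fin m).succ = ⟨k, hk⟩ := by
          simp only [Fin.succ_mk, Fin.ext_iff]
          omega
        have h10 := hy1 0
        have ihres := IH (k-1) (c + 1 - y 0) hk1m (by omega)
          (by rw [hsucc]; omega)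
          (by rw [← e3]; omega)
        rw [e4]
        have hkey : c ≤ y 0 * (c + 1 - y 0) := by
          have h10 := hy1 0
          obtain ⟨e, he⟩ : ∃ e, y 0 = 1 + e := ⟨y 0 - 1, by omega⟩
          obtain ⟨f, hf⟩ : ∃ f, c = y 0 + f := ⟨c - y 0, by omega⟩
          have h11 : c + 1 - y 0 = 1 + f := by omega
          rw [h11, hf, he]
          nlinarith
        calc c * ∏ j : Fin m, (if k - 1 < (j:ℕ) then dd j.succ else 1)
            ≤ (y 0 * (c + 1 - y 0)) * ∏ j : Fin m, (if k - 1 < (j:ℕ) then dd j.succ else 1) :=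
              Nat.mul_le_mul_right _ hkey
          _ = y 0 * ((c + 1 - y 0) * ∏ j : Fin m, (if k - 1 < (j:ℕ) then dd j.succ else 1)) := by
              ring
          _ ≤ y 0 * ∏ j : Fin m, y j.succ := Nat.mul_le_mul_left _ ihres
      · -- big y 0 : roll over to tail level k
        have split1 : (∑ j : Fin m, (if k ≤ (j:ℕ) then dd j.succ else 0))
            = dd (⟨k, hkm'⟩ : Fin m).succ
              + ∑ j : Fin m, (if k < (j:ℕ) then dd j.succ else 0) :=
          AF_sum_split hkm' (fun j => dd j.succ)
        have split2 : (∏ j : Fin m, (if k ≤ (j:ℕ) then dd j.succ else 1))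
            = dd (⟨k, hkm'⟩ : Fin m).succ
              * ∏ j : Fin m, (if k < (j:ℕ) then dd j.succ else 1) :=
          AF_prod_split hkm' (fun j => dd j.succ)
        rw [split1] at hsum
        rw [split2]
        obtain ⟨D, hD⟩ : ∃ D, D = dd (⟨k, hkm'⟩ : Fin m).succ := ⟨_, rfl⟩
        rw [← hD] at hsum ⊢
        have hy0D : y 0 ≤ D := by
          rw [hD]; exact le_trans (hy2 0) (hsort 0 _ (Fin.zero_le _))
        have hc0 : c < y 0 := by omega
        have h10 := hy1 0
        have ihres := IH k (D + c - y 0) hkm' (by omega) (by rw [hD]; omega) (by omega)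
        have hkey : c * D ≤ y 0 * (D + c - y 0) := by
          obtain ⟨e, he⟩ : ∃ e, y 0 = c + e := ⟨y 0 - c, by omega⟩
          obtain ⟨f, hf⟩ : ∃ f, D = y 0 + f := ⟨D - y 0, by omega⟩
          have h1 : D + c - y 0 = c + f := by omega
          rw [h1, hf, he]
          nlinarith
        calc c * (D * ∏ j : Fin m, (if k < (j:ℕ) then dd j.succ else 1))
            = (c * D) * ∏ j : Fin m, (if k < (j:ℕ) then dd j.succ else 1) := by ring
          _ ≤ (y 0 * (D + c - y 0)) * ∏ j : Fin m, (if k < (j:ℕ) then dd j.succ else 1) :=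
              Nat.mul_le_mul_right _ hkey
          _ = y 0 * ((D + c - y 0) * ∏ j : Fin m, (if k < (j:ℕ) then dd j.succ else 1)) := by ring
          _ ≤ y 0 * ∏ j : Fin m, y j.succ := Nat.mul_le_mul_left _ ihres


section AFhelp

variable {K : Type*} [Field K] [DecidableEq K]




lemma AF_span_degreeOf_le (j : Fin n) (b : ℕ) (S : Set (MvPolynomial (Fin n) K))
    (hS : ∀ p ∈ S, MvPolynomial.degreeOf j p ≤ b) :
    ∀ x ∈ Submodule.span K S, MvPolynomial.degreeOf j x ≤ b := by
  intro x hx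
  let M : Submodule K (MvPolynomial (Fin n) K) :=
  { carrier := {p | MvPolynomial.degreeOf j p ≤ b}
    add_mem' := fun {a c} ha hc =>
      le_trans (MvPolynomial.degreeOf_add_le _ _ _) (max_le ha hc)
    zero_mem' := by simp [MvPolynomial.degreeOf_zero]
    smul_mem' := fun c p hp => by
      simp only [Set.mem_setOf_eq, MvPolynomial.smul_eq_C_mul]
      exact le_trans (MvPolynomial.degreeOf_C_mul_le _ _ _) hp }
  have hle : Submodule.span K S ≤ M := Submodule.span_le.2 fun p hp => hS p hp
  exact hle hx

lemma AF_span_totalDegree_le (b : ℕ) (S : Set (MvPolynomial (Fin n) K))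
    (hS : ∀ p ∈ S, MvPolynomial.totalDegree p ≤ b) :
    ∀ x ∈ Submodule.span K S, MvPolynomial.totalDegree x ≤ b := by
  intro x hx
  let M : Submodule K (MvPolynomial (Fin n) K) :=
  { carrier := {p | MvPolynomial.totalDegree p ≤ b}
    add_mem' := fun {a c} ha hc =>
      le_trans (MvPolynomial.totalDegree_add _ _) (max_le ha hc)
    zero_mem' := by simp
    smul_mem' := fun c p hp => by
      simp only [Set.mem_setOf_eq, MvPolynomial.smul_eq_C_mul]
      refine le_trans (MvPolynomial.totalDegree_mul _ _) ?_
      simpa [MvPolynomial.totalDegree_C] using hp }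
  have hle : Submodule.span K S ≤ M := Submodule.span_le.2 fun p hp => hS p hp
  exact hle hx

lemma AF_modByMonic_coeff_mem (g : Polynomial (MvPolynomial (Fin n) K)) (hg : g.Monic)
    (hg1 : 1 ≤ g.natDegree) (hgc : ∀ s, ∃ cc : K, g.coeff s = MvPolynomial.C cc) :
    ∀ (N : ℕ) (Q : Polynomial (MvPolynomial (Fin n) K)), Q.natDegree ≤ N → ∀ i,
      (Q %ₘ g).coeff i ∈ Submodule.span K {x | ∃ t, i ≤ t ∧ x = Q.coeff t} := by
  have base : ∀ Q : Polynomial (MvPolynomial (Fin n) K), Q.degree < g.degree → ∀ i,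
      (Q %ₘ g).coeff i ∈ Submodule.span K {x | ∃ t, i ≤ t ∧ x = Q.coeff t} := by
    intro Q h i
    rw [(Polynomial.modByMonic_eq_self_iff hg).2 h]
    exact Submodule.subset_span ⟨i, le_rfl, rfl⟩
  intro N
  induction N with
  | zero =>
    intro Q hQ i
    apply base
    have h0 : Q.natDegree = 0 := Nat.le_zero.1 hQ
    have h1 : Q.degree ≤ (0 : WithBot ℕ) := by
      simpa [h0] using Polynomial.degree_le_natDegree (p := Q)
    have h2 : (0 : WithBot ℕ) < g.degree := by
      rw [Polynomial.degree_eq_natDegree hg.ne_zero]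
      exact_mod_cast hg1
    exact lt_of_le_of_lt h1 h2
  | succ N ih =>
    intro Q hQ i
    by_cases hlt : Q.degree < g.degree
    · exact base Q hlt i
    · have hgdeg : g.degree ≠ ⊥ := fun h => hg.ne_zero (Polynomial.degree_eq_bot.1 h)
      have hQ0 : Q ≠ 0 := by
        rintro rfl
        exact hlt (by rw [Polynomial.degree_zero]; exact Ne.bot_lt hgdeg)
      have hdge : g.degree ≤ Q.degree := not_lt.1 hlt
      set e₀ := Q.natDegree - g.natDegree with he₀
      set Q' := Q - Polynomial.C Q.leadingCoeff * Polynomial.X ^ e₀ * g with hQ'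
      have hmod : Q %ₘ g = Q' %ₘ g := by
        have hQeq : Q = Q' + (Polynomial.C Q.leadingCoeff * Polynomial.X ^ e₀) * g := by
          rw [hQ']; ring
        conv_lhs => rw [hQeq]
        rw [Polynomial.add_modByMonic, mul_comm, Polynomial.self_mul_modByMonic hg, add_zero]
      have hwf : Q'.degree < Q.degree := by
        have heq : Q - Polynomial.C Q.leadingCoeff * Polynomial.X ^ e₀ * g
            = Q - g * (Polynomial.C Q.leadingCoeff * Polynomial.X ^ e₀) := by ring
        rw [hQ', heq]
        exact Polynomial.div_wf_lemma ⟨hdge, hQ0⟩ hg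
      have hQ'N : Q'.natDegree ≤ N := by
        rcases eq_or_ne Q' 0 with h0 | h0
        · simp [h0]
        · have := Polynomial.natDegree_lt_natDegree h0 hwf
          omega
      have ihres := ih Q' hQ'N i
      rw [hmod]
      refine Submodule.span_le.2 ?_ ihres
      rintro x ⟨t, hti, rfl⟩
      by_cases htB : t ≤ Q.natDegree
      · have hcoeff : Q'.coeff t = Q.coeff t
            - ((Polynomial.C Q.leadingCoeff * Polynomial.X ^ e₀) * g).coeff t := by
          rw [hQ']
          simp [Polynomial.coeff_sub, mul_assoc]
        rw [hcoeff]
        apply Submodule.sub_mem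
        · exact Submodule.subset_span ⟨t, hti, rfl⟩
        · have hcomm : (Polynomial.C Q.leadingCoeff * Polynomial.X ^ e₀) * g
              = (Polynomial.C Q.leadingCoeff * g) * Polynomial.X ^ e₀ := by ring
          rw [hcomm, Polynomial.coeff_mul_X_pow']
          split_ifs with he
          · rw [Polynomial.coeff_C_mul]
            obtain ⟨cc, hcc⟩ := hgc (t - e₀)
            rw [hcc, mul_comm, ← MvPolynomial.smul_eq_C_mul]
            exact Submodule.smul_mem _ cc (Submodule.subset_span
              ⟨Q.natDegree, le_trans hti htB, (Polynomial.coeff_natDegree).symm⟩)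
          · exact Submodule.zero_mem _
      · have hz : Q'.coeff t = 0 := by
          apply Polynomial.coeff_eq_zero_of_degree_lt
          refine lt_of_lt_of_le hwf ?_
          rw [Polynomial.degree_eq_natDegree hQ0]
          exact_mod_cast Nat.le_of_lt (by omega)
        rw [hz]
        exact Submodule.zero_mem _




lemma AF_symm_degreeOf_zero (r : Polynomial (MvPolynomial (Fin n) K)) :
    MvPolynomial.degreeOf 0 ((MvPolynomial.finSuccEquiv K n).symm r) = r.natDegree := by
  have h := MvPolynomial.natDegree_finSuccEquiv ((MvPolynomial.finSuccEquiv K n).symm r)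
  rw [AlgEquiv.apply_symm_apply] at h
  exact h.symm

lemma AF_symm_degreeOf_succ_le (r : Polynomial (MvPolynomial (Fin n) K)) (j : Fin n) (b : ℕ)
    (h : ∀ i, MvPolynomial.degreeOf j (r.coeff i) ≤ b) :
    MvPolynomial.degreeOf j.succ ((MvPolynomial.finSuccEquiv K n).symm r) ≤ b := by
  rw [MvPolynomial.degreeOf_le_iff]
  intro m hm
  have hmem : Finsupp.tail m ∈ ((MvPolynomial.finSuccEquiv K n
      ((MvPolynomial.finSuccEquiv K n).symm r)).coeff (m 0)).support := by
    rw [MvPolynomial.mem_support_coeff_finSuccEquiv, Finsupp.cons_tail]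
    exact hm
  rw [AlgEquiv.apply_symm_apply] at hmem
  have h1 : (Finsupp.tail m) j ≤ MvPolynomial.degreeOf j (r.coeff (m 0)) :=
    MvPolynomial.monomial_le_degreeOf j hmem
  rw [Finsupp.tail_apply] at h1
  exact le_trans h1 (h (m 0))

lemma AF_symm_totalDegree_le (r : Polynomial (MvPolynomial (Fin n) K)) (b : ℕ)
    (h : ∀ i, r.coeff i ≠ 0 → (r.coeff i).totalDegree + i ≤ b) :
    ((MvPolynomial.finSuccEquiv K n).symm r).totalDegree ≤ b := by
  rw [MvPolynomial.totalDegree]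
  apply Finset.sup_le
  intro m hm
  have hmem : Finsupp.tail m ∈ (r.coeff (m 0)).support := by
    have h' : Finsupp.tail m ∈ ((MvPolynomial.finSuccEquiv K n
        ((MvPolynomial.finSuccEquiv K n).symm r)).coeff (m 0)).support := by
      rw [MvPolynomial.mem_support_coeff_finSuccEquiv, Finsupp.cons_tail]
      exact hm
    rwa [AlgEquiv.apply_symm_apply] at h'
  have hne : r.coeff (m 0) ≠ 0 := fun h0 => by simp [h0] at hmem
  have h1 : ((Finsupp.tail m).sum fun _ e => e) ≤ (r.coeff (m 0)).totalDegree :=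
    MvPolynomial.le_totalDegree hmem
  have h2 : (m.sum fun _ e => e) = m 0 + ((Finsupp.tail m).sum fun _ e => e) := by
    conv_lhs => rw [← Finsupp.cons_tail m]
    rw [Finsupp.sum_cons]
  rw [h2]
  have h3 := h (m 0) hne
  omega

lemma AF_count_nonroots (A0 : Finset K) (P : Polynomial K) (hP : P ≠ 0) (m : ℕ)
    (hdeg : P.natDegree ≤ m) :
    A0.card ≤ (A0.filter (fun a => Polynomial.eval a P ≠ 0)).card + m := by
  have hsub : A0.filter (fun a => Polynomial.eval a P = 0) ⊆ P.roots.toFinset := by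
    intro a ha
    rw [Multiset.mem_toFinset, Polynomial.mem_roots hP]
    exact (Finset.mem_filter.1 ha).2
  have h1 : (A0.filter (fun a => Polynomial.eval a P = 0)).card ≤ m :=
    calc (A0.filter (fun a => Polynomial.eval a P = 0)).card
        ≤ P.roots.toFinset.card := Finset.card_le_card hsub
      _ ≤ Multiset.card P.roots := Multiset.toFinset_card_le _
      _ ≤ P.natDegree := Polynomial.card_roots' P
      _ ≤ m := hdeg
  have h2 := Finset.card_filter_add_card_filter_not
    (s := A0) (p := fun a => Polynomial.eval a P = 0)
  simp only [ne_eq]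
  omega

lemma AF_card_piFinset_filter (A : Fin (n+1) → Finset K)
    (P : (Fin (n+1) → K) → Prop) [DecidablePred P] :
    ((Fintype.piFinset A).filter (fun x => P x)).card
      = ∑ x' ∈ Fintype.piFinset (fun j : Fin n => A j.succ),
          ((A 0).filter (fun a => P (Fin.cons a x'))).card := by
  have hset : (Fintype.piFinset A).filter (fun x => P x)
      = (Fintype.piFinset (fun j : Fin n => A j.succ)).biUnion
          (fun x' => ((A 0).filter (fun a => P (Fin.cons a x'))).image
            (fun a => Fin.cons a x')) := by
    ext x
    simp only [Finset.mem_filter, Fintype.mem_piFinset, Finset.mem_biUnion, Finset.mem_image]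
    constructor
    · rintro ⟨hx, hPx⟩
      exact ⟨Fin.tail x, fun j => hx j.succ, x 0,
        ⟨hx 0, by rw [Fin.cons_self_tail]; exact hPx⟩, Fin.cons_self_tail x⟩
    · rintro ⟨x', hx', a, ⟨ha0, hPa⟩, rfl⟩
      refine ⟨?_, hPa⟩
      intro i
      refine Fin.cases ?_ ?_ i
      · simpa using ha0
      · intro j; simpa using hx' j
  rw [hset, Finset.card_biUnion]
  · refine Finset.sum_congr rfl fun x' _ => ?_
    exact Finset.card_image_of_injective _ (fun a b hab => by
      have h0 := congrFun hab 0
      simpa using h0)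
  · intro x1 hx1 x2 hx2 hne
    simp only [Finset.disjoint_left, Finset.mem_image]
    rintro x ⟨a, ha, rfl⟩ ⟨b, hb, hEq⟩
    have h := congrArg Fin.tail hEq
    rw [Fin.tail_cons, Fin.tail_cons] at h
    exact hne h.symm

lemma AF_reduce : ∀ (n : ℕ) (A : Fin n → Finset K), (∀ i, 1 ≤ (A i).card) →
    ∀ F : MvPolynomial (Fin n) K,
    ∃ F' : MvPolynomial (Fin n) K,
      (∀ x : Fin n → K, (∀ i, x i ∈ A i) → MvPolynomial.eval x F' = MvPolynomial.eval x F) ∧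
      (∀ i, F'.degreeOf i < (A i).card) ∧ F'.totalDegree ≤ F.totalDegree := by
  intro n
  induction n with
  | zero =>
    intro A hA F
    exact ⟨F, fun x _ => rfl, fun i => i.elim0, le_rfl⟩
  | succ m ih =>
    intro A hA F
    classical
    set g0 : Polynomial K := ∏ a ∈ A 0, (Polynomial.X - Polynomial.C a) with hg0
    have hg0m : g0.Monic := monic_prod_of_monic _ _ fun a _ => monic_X_sub_C a
    have hg0nd : g0.natDegree = (A 0).card := by
      rw [hg0, Polynomial.natDegree_prod_of_monic _ _ fun a _ => monic_X_sub_C a]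
      simp
    set g : Polynomial (MvPolynomial (Fin m) K) := g0.map MvPolynomial.C with hgdef
    have hgm : g.Monic := hg0m.map _
    have hgnd : g.natDegree = (A 0).card := by
      rw [hgdef, hg0m.natDegree_map]
      exact hg0nd
    have hg1 : 1 ≤ g.natDegree := by rw [hgnd]; exact hA 0
    have hgc : ∀ s, ∃ cc : K, g.coeff s = MvPolynomial.C cc := fun s =>
      ⟨g0.coeff s, by rw [hgdef, Polynomial.coeff_map]⟩
    have hgne1 : g ≠ 1 := by
      intro h1
      rw [h1, Polynomial.natDegree_one] at hg1; omega
    set Q := MvPolynomial.finSuccEquiv K m F with hQdef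
    set r := Q %ₘ g with hrdef
    set F1 := (MvPolynomial.finSuccEquiv K m).symm r with hF1def
    have hF1Q : MvPolynomial.finSuccEquiv K m F1 = r := AlgEquiv.apply_symm_apply _ _
    have hmapg : ∀ x' : Fin m → K, g.map (MvPolynomial.eval x') = g0 := by
      intro x'
      rw [hgdef, Polynomial.map_map]
      have hcomp : (MvPolynomial.eval x').comp (MvPolynomial.C) = RingHom.id K := by
        ext c; simp
      rw [hcomp, Polynomial.map_id]
    have values1 : ∀ (a : K), a ∈ A 0 → ∀ x' : Fin m → K,
        MvPolynomial.eval (Fin.cons a x') F1 = MvPolynomial.eval (Fin.cons a x') F := by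
      intro a ha x'
      rw [MvPolynomial.eval_eq_eval_mv_eval', MvPolynomial.eval_eq_eval_mv_eval', hF1Q, ← hQdef]
      have hQsplit : Q = r + g * (Q /ₘ g) := (Polynomial.modByMonic_add_div Q g).symm
      have hg0eval : g0.eval a = 0 := by
        rw [hg0, Polynomial.eval_prod]
        exact Finset.prod_eq_zero ha (by simp)
      conv_rhs => rw [hQsplit]
      rw [Polynomial.map_add, Polynomial.map_mul, Polynomial.eval_add, Polynomial.eval_mul,
        hmapg, hg0eval, zero_mul, add_zero]
    have hspan := AF_modByMonic_coeff_mem g hgm hg1 hgc Q.natDegree Q le_rfl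
    simp only [← hrdef] at hspan
    have hrnd : r.natDegree < (A 0).card := by
      have h1 := Polynomial.natDegree_modByMonic_lt Q hgm hgne1
      rw [← hrdef] at h1
      omega
    have htd1 : F1.totalDegree ≤ F.totalDegree := by
      apply AF_symm_totalDegree_le
      intro i hi
      have hiQ : i ≤ Q.natDegree := by
        by_contra hgt
        push_neg at hgt
        apply hi
        have hle : Submodule.span K {x | ∃ t, i ≤ t ∧ x = Q.coeff t} ≤ ⊥ :=
          Submodule.span_le.2 (by
            rintro x ⟨t, hti, rfl⟩
            have h1 : Q.natDegree < t := by omega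
            simp [Polynomial.coeff_eq_zero_of_natDegree_lt h1])
        have h0 := hle (hspan i)
        rwa [Submodule.mem_bot] at h0
      have hQnat : Q.natDegree = F.degreeOf 0 := MvPolynomial.natDegree_finSuccEquiv F
      have hd0 : F.degreeOf 0 ≤ F.totalDegree := MvPolynomial.degreeOf_le_totalDegree F 0
      have hbound : (r.coeff i).totalDegree ≤ F.totalDegree - i := by
        apply AF_span_totalDegree_le _ _ _ _ (hspan i)
        rintro p ⟨t, hti, rfl⟩
        rcases eq_or_ne (Q.coeff t) 0 with h0 | h0
        · simp [h0]
        · have hcle := MvPolynomial.totalDegree_coeff_finSuccEquiv_add_le F t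
            (by rw [← hQdef]; exact h0)
          rw [← hQdef] at hcle
          omega
      omega
    -- step 2 : reduce tail coefficients
    choose Fc hFc1 hFc2 hFc3 using
      fun i => ih (fun j => A j.succ) (fun j => hA j.succ) (r.coeff i)
    set r2 : Polynomial (MvPolynomial (Fin m) K) :=
      ∑ i ∈ r.support, Polynomial.monomial i (Fc i) with hr2
    have hr2coeff : ∀ t, r2.coeff t = if t ∈ r.support then Fc t else 0 := by
      intro t
      rw [hr2, Polynomial.finset_sum_coeff]
      simp_rw [Polynomial.coeff_monomial]
      exact Finset.sum_ite_eq' r.support t Fc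
    set F2 := (MvPolynomial.finSuccEquiv K m).symm r2 with hF2def
    have hF2Q : MvPolynomial.finSuccEquiv K m F2 = r2 := AlgEquiv.apply_symm_apply _ _
    refine ⟨F2, ?_, ?_, ?_⟩
    · -- values agree on the grid
      intro x hx
      have hx0 : x 0 ∈ A 0 := hx 0
      have hx' : ∀ j : Fin m, (Fin.tail x) j ∈ A j.succ := fun j => hx j.succ
      have hcons : Fin.cons (x 0) (Fin.tail x) = x := Fin.cons_self_tail x
      rw [← hcons, ← values1 (x 0) hx0 (Fin.tail x)]
      rw [MvPolynomial.eval_eq_eval_mv_eval', MvPolynomial.eval_eq_eval_mv_eval', hF2Q, hF1Q]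
      rw [Polynomial.eval_map, Polynomial.eval_map]
      conv_rhs => rw [Polynomial.as_sum_support r]
      rw [hr2, Polynomial.eval₂_finset_sum, Polynomial.eval₂_finset_sum]
      refine Finset.sum_congr rfl fun i hi => ?_
      rw [Polynomial.eval₂_monomial, Polynomial.eval₂_monomial]
      rw [hFc1 i (Fin.tail x) hx']
    · -- degrees
      intro i
      refine Fin.cases ?_ ?_ i
      · rcases eq_or_ne r2 0 with h0 | h0
        · rw [hF2def, AF_symm_degreeOf_zero, h0]
          simpa using hA 0
        · have hmem : r2.natDegree ∈ r.support := by
            by_contra hmem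
            have hc := hr2coeff r2.natDegree
            rw [if_neg hmem] at hc
            exact (Polynomial.leadingCoeff_ne_zero.2 h0) hc
          have h1 : r2.natDegree ≤ r.natDegree := Polynomial.le_natDegree_of_mem_supp _ hmem
          rw [hF2def, AF_symm_degreeOf_zero]
          omega
      · intro j
        have hj := hA j.succ
        have hle : MvPolynomial.degreeOf j.succ F2 ≤ (A j.succ).card - 1 := by
          rw [hF2def]
          apply AF_symm_degreeOf_succ_le
          intro i
          rw [hr2coeff i]
          split_ifs with hmem
          · have := hFc2 i j
            omega
          · simp
        omega
    · -- total degree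
      refine le_trans ?_ htd1
      rw [hF2def]
      apply AF_symm_totalDegree_le
      intro i hi
      rw [hr2coeff i] at hi
      split_ifs at hi with hmem
      · have h1 : (Fc i).totalDegree ≤ (r.coeff i).totalDegree := hFc3 i
        have h2 := MvPolynomial.totalDegree_coeff_finSuccEquiv_add_le F1 i
          (by rw [hF1Q]; exact Polynomial.mem_support_iff.1 hmem)
        rw [hF1Q] at h2
        rw [hr2coeff i, if_pos hmem]
        omega
      · exact absurd rfl hi

lemma AF_core : ∀ (n : ℕ) (A : Fin n → Finset K), (∀ i, 1 ≤ (A i).card) →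
    ∀ F : MvPolynomial (Fin n) K, F ≠ 0 → (∀ i, F.degreeOf i < (A i).card) →
    ∃ y : Fin n → ℕ, (∀ i, 1 ≤ y i) ∧ (∀ i, y i ≤ (A i).card) ∧
      (∑ i, (A i).card ≤ F.totalDegree + ∑ i, y i) ∧
      (∏ i, y i ≤ ((Fintype.piFinset A).filter
        (fun x => MvPolynomial.eval x F ≠ 0)).card) := by
  intro n
  induction n with
  | zero =>
    intro A hA F hF0 hdeg
    refine ⟨fun _ => 1, fun i => le_rfl, fun i => i.elim0, by simp, ?_⟩
    obtain ⟨c, rfl⟩ := MvPolynomial.C_surjective (Fin 0) F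
    have hc : c ≠ 0 := fun h => hF0 (by rw [h]; simp)
    have hfil : (Fintype.piFinset A).filter
        (fun x => MvPolynomial.eval x (MvPolynomial.C c) ≠ 0) = Fintype.piFinset A :=
      Finset.filter_true_of_mem (fun x _ => by simpa using hc)
    rw [hfil]
    simp
  | succ m ih =>
    intro A hA F hF0 hdeg
    classical
    set Q := MvPolynomial.finSuccEquiv K m F with hQdef
    have hQ0 : Q ≠ 0 := by
      rw [hQdef]
      simpa using hF0
    have hmdlt : Q.natDegree < (A 0).card := by
      have h1 : Q.natDegree = F.degreeOf 0 := by
        rw [hQdef]; exact MvPolynomial.natDegree_finSuccEquiv F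
      rw [h1]; exact hdeg 0
    set gl := Q.leadingCoeff with hgl
    have hgl0 : gl ≠ 0 := by rw [hgl]; exact Polynomial.leadingCoeff_ne_zero.2 hQ0
    have hglc : gl = Q.coeff Q.natDegree := rfl
    have hgldeg : ∀ j : Fin m, gl.degreeOf j < (A j.succ).card := by
      intro j
      have h1 := MvPolynomial.degreeOf_coeff_finSuccEquiv F j Q.natDegree
      rw [← hQdef] at h1
      have h2 := hdeg j.succ
      rw [hglc]
      omega
    have hgtd : gl.totalDegree + Q.natDegree ≤ F.totalDegree := by
      have h1 := MvPolynomial.totalDegree_coeff_finSuccEquiv_add_le F Q.natDegree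
        (by rw [← hQdef, ← hglc]; exact hgl0)
      rw [← hQdef, ← hglc] at h1
      exact h1
    obtain ⟨y', hy1', hy2', hsum0, hprod0⟩ :=
      ih (fun j => A j.succ) (fun j => hA j.succ) gl hgl0 hgldeg
    have hsum' : ∑ i : Fin m, (A i.succ).card ≤ gl.totalDegree + ∑ i, y' i := hsum0
    have hprod' : ∏ i, y' i ≤ ((Fintype.piFinset (fun j : Fin m => A j.succ)).filter
        (fun x => MvPolynomial.eval x gl ≠ 0)).card := hprod0
    set G' := Fintype.piFinset (fun j : Fin m => A j.succ) with hG'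
    set c0 := (A 0).card - Q.natDegree with hc0
    have hc01 : 1 ≤ c0 := by omega
    have hslice : ∀ x' ∈ G'.filter (fun x' => MvPolynomial.eval x' gl ≠ 0),
        c0 ≤ ((A 0).filter (fun a => MvPolynomial.eval (Fin.cons a x') F ≠ 0)).card := by
      intro x' hx'
      have hx'' : MvPolynomial.eval x' gl ≠ 0 := (Finset.mem_filter.1 hx').2
      have hP0 : (Q.map (MvPolynomial.eval x')) ≠ 0 := by
        intro h0
        apply hx''
        have hco := congrArg (fun p => Polynomial.coeff p Q.natDegree) h0
        simpa [Polynomial.coeff_map, ← hglc] using hco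
      have hPdeg : (Q.map (MvPolynomial.eval x')).natDegree ≤ Q.natDegree :=
        Polynomial.natDegree_map_le
      have hcnt := AF_count_nonroots (A 0) (Q.map (MvPolynomial.eval x')) hP0
        Q.natDegree hPdeg
      have hfeq : (A 0).filter (fun a => MvPolynomial.eval (Fin.cons a x') F ≠ 0)
          = (A 0).filter (fun a => Polynomial.eval a (Q.map (MvPolynomial.eval x')) ≠ 0) := by
        apply Finset.filter_congr
        intro a _
        rw [MvPolynomial.eval_eq_eval_mv_eval', ← hQdef]
      rw [hfeq]
      omega
    have hcount := AF_card_piFinset_filter A (fun x => MvPolynomial.eval x F ≠ 0)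
    have hNcard : (G'.filter (fun x' => MvPolynomial.eval x' gl ≠ 0)).card * c0
        ≤ ∑ x' ∈ G', ((A 0).filter (fun a => MvPolynomial.eval (Fin.cons a x') F ≠ 0)).card := by
      calc (G'.filter (fun x' => MvPolynomial.eval x' gl ≠ 0)).card * c0
          = ∑ _x' ∈ G'.filter (fun x' => MvPolynomial.eval x' gl ≠ 0), c0 := by
            rw [Finset.sum_const, smul_eq_mul]
        _ ≤ ∑ x' ∈ G'.filter (fun x' => MvPolynomial.eval x' gl ≠ 0),
              ((A 0).filter (fun a => MvPolynomial.eval (Fin.cons a x') F ≠ 0)).card :=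
            Finset.sum_le_sum hslice
        _ ≤ ∑ x' ∈ G', ((A 0).filter
              (fun a => MvPolynomial.eval (Fin.cons a x') F ≠ 0)).card :=
            Finset.sum_le_sum_of_subset (Finset.filter_subset _ _)
    refine ⟨Fin.cons c0 y', ?_, ?_, ?_, ?_⟩
    · intro i
      refine Fin.cases ?_ ?_ i
      · simpa using hc01
      · intro j; simpa using hy1' j
    · intro i
      refine Fin.cases ?_ ?_ i
      · simp only [Fin.cons_zero]; omega
      · intro j; simpa using hy2' j
    · rw [Fin.sum_univ_succ, Fin.sum_univ_succ]
      simp only [Fin.cons_zero, Fin.cons_succ]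
      omega
    · rw [Fin.prod_univ_succ]
      simp only [Fin.cons_zero, Fin.cons_succ]
      calc c0 * ∏ j : Fin m, y' j
          ≤ c0 * (G'.filter (fun x' => MvPolynomial.eval x' gl ≠ 0)).card :=
            Nat.mul_le_mul_left _ hprod'
        _ = (G'.filter (fun x' => MvPolynomial.eval x' gl ≠ 0)).card * c0 := mul_comm _ _
        _ ≤ ∑ x' ∈ G', ((A 0).filter
              (fun a => MvPolynomial.eval (Fin.cons a x') F ≠ 0)).card := hNcard
        _ = ((Fintype.piFinset A).filter (fun x => MvPolynomial.eval x F ≠ 0)).card :=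
            hcount.symm

end AFhelp

set_option maxHeartbeats 1000000 in
theorem stmt_8 {K : Type*} [Field K] [DecidableEq K] (n : ℕ) (A : Fin n → Finset K)
    (hA : ∀ i, 2 ≤ (A i).card)
    (hmono : ∀ i j : Fin n, i ≤ j → (A i).card ≤ (A j).card)
    (d k ℓ : ℕ) (hd1 : 1 ≤ d) (hk : k < n)
    (hdecomp : d = (∑ i ∈ Finset.univ.filter (fun i : Fin n => (i : ℕ) < k),
        ((A i).card - 1)) + ℓ)
    (hl1 : 1 ≤ ℓ) (hl2 : ℓ ≤ (A ⟨k, hk⟩).card - 1)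
    (F : MvPolynomial (Fin n) K) (hdeg : F.totalDegree ≤ d)
    (hnz : ∃ x : Fin n → K, (∀ i, x i ∈ A i) ∧ MvPolynomial.eval x F ≠ 0) :
    (((Fintype.piFinset A).filter fun x => MvPolynomial.eval x F = 0).card : ℤ) ≤
      (∏ i, ((A i).card : ℤ)) -
        (∏ i ∈ Finset.univ.filter (fun i : Fin n => k ≤ (i : ℕ)), ((A i).card : ℤ)) +
        (ℓ : ℤ) * ∏ i ∈ Finset.univ.filter (fun i : Fin n => k < (i : ℕ)), ((A i).card : ℤ) := by
  classical
  obtain ⟨F', hvals, hred, htd⟩ := AF_reduce n A (fun i => by have := hA i; omega) F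
  obtain ⟨x, hxgrid, hxne⟩ := hnz
  have hF'0 : F' ≠ 0 := by
    intro h0
    apply hxne
    rw [← hvals x hxgrid, h0]
    simp
  obtain ⟨y, hy1, hy2, hsum, hprod⟩ := AF_core n A (fun i => by have := hA i; omega) F' hF'0 hred
  -- the two filtered sets for F and F' coincide on the grid
  have heqfil : (Fintype.piFinset A).filter (fun x => MvPolynomial.eval x F' ≠ 0)
      = (Fintype.piFinset A).filter (fun x => ¬ MvPolynomial.eval x F = 0) := by
    apply Finset.filter_congr
    intro z hz
    have hzgrid : ∀ i, z i ∈ A i := Fintype.mem_piFinset.1 hz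
    rw [hvals z hzgrid]
  -- abbreviations
  have hkcard : (Finset.univ.filter (fun i : Fin n => (i:ℕ) < k)).card = k := by
    have h1 : Finset.univ.filter (fun i : Fin n => (i:ℕ) < k) = Finset.Iio ⟨k, hk⟩ := by
      ext i
      simp [Finset.mem_Iio, Fin.lt_def]
    rw [h1]
    exact Fin.card_Iio ⟨k, hk⟩
  -- sum splitting
  have hs2 : ∑ i ∈ Finset.univ.filter (fun i : Fin n => (i:ℕ) < k), (A i).card
      = (∑ i ∈ Finset.univ.filter (fun i : Fin n => (i : ℕ) < k), ((A i).card - 1)) + k := by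
    have h1 : ∀ i ∈ Finset.univ.filter (fun i : Fin n => (i:ℕ) < k),
        (A i).card = ((A i).card - 1) + 1 := fun i _ => by have := hA i; omega
    rw [Finset.sum_congr rfl h1, Finset.sum_add_distrib, Finset.sum_const, hkcard,
      smul_eq_mul, mul_one]
  have hs1 : ∑ i, (A i).card
      = (∑ i ∈ Finset.univ.filter (fun i : Fin n => (i:ℕ) < k), (A i).card)
        + (A ⟨k, hk⟩).card
        + ∑ i : Fin n, (if k < (i:ℕ) then (A i).card else 0) := by
    rw [Finset.sum_filter]
    have h1 : ∀ i : Fin n, (A i).card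
        = (if (i:ℕ) < k then (A i).card else 0) + (if i = ⟨k,hk⟩ then (A i).card else 0)
          + (if k < (i:ℕ) then (A i).card else 0) := by
      intro i
      rcases eq_or_ne i ⟨k, hk⟩ with rfl | hne
      · simp
      · have hval : (i:ℕ) ≠ k := by simpa [Fin.ext_iff] using hne
        rw [if_neg hne]
        split_ifs <;> omega
    rw [Finset.sum_congr rfl (fun i _ => h1 i), Finset.sum_add_distrib, Finset.sum_add_distrib,
      Finset.sum_ite_eq' Finset.univ ⟨k, hk⟩ (fun i => (A i).card),
      if_pos (Finset.mem_univ _)]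
  obtain ⟨c, hc⟩ : ∃ c, c = (A ⟨k, hk⟩).card - ℓ := ⟨_, rfl⟩
  have hAk := hA ⟨k, hk⟩
  have hc1 : 1 ≤ c := by omega
  have hsumMIN : k + c + ∑ i : Fin n, (if k < (i:ℕ) then (A i).card else 0) ≤ ∑ i, y i := by
    have h0 : F'.totalDegree ≤ d := le_trans htd hdeg
    have h1 : ∑ i, (A i).card ≤ d + ∑ i, y i := by omega
    have h2 : ∑ i, (A i).card
        = (∑ i ∈ Finset.univ.filter (fun i : Fin n => (i : ℕ) < k), ((A i).card - 1)) + k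
          + (A ⟨k, hk⟩).card + ∑ i : Fin n, (if k < (i:ℕ) then (A i).card else 0) := by
      rw [hs1, hs2]
    omega
  have hMIN : c * ∏ i : Fin n, (if k < (i:ℕ) then (A i).card else 1) ≤ ∏ i, y i :=
    AF_MIN n (fun i => (A i).card) y k c hk hmono hy1 hy2 hc1 (by show c ≤ (A ⟨k, hk⟩).card; omega) hsumMIN
  -- counting
  set Zc := ((Fintype.piFinset A).filter (fun x => MvPolynomial.eval x F = 0)).card with hZc
  set NZc := ((Fintype.piFinset A).filter (fun x => ¬ MvPolynomial.eval x F = 0)).card with hNZc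
  have hsplit : Zc + NZc = ∏ i, (A i).card := by
    rw [hZc, hNZc, Finset.card_filter_add_card_filter_not]
    exact Fintype.card_piFinset A
  have hprodF : ∏ i, y i ≤ NZc := by
    rw [hNZc, ← heqfil]
    exact hprod
  set Plt := ∏ i ∈ Finset.univ.filter (fun i : Fin n => k < (i:ℕ)), (A i).card with hPlt
  have hPltIte : Plt = ∏ i : Fin n, (if k < (i:ℕ) then (A i).card else 1) := by
    rw [hPlt, Finset.prod_filter]
  set Plek := ∏ i ∈ Finset.univ.filter (fun i : Fin n => k ≤ (i:ℕ)), (A i).card with hPlek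
  have hins : Finset.univ.filter (fun i : Fin n => k ≤ (i:ℕ))
      = insert ⟨k, hk⟩ (Finset.univ.filter (fun i : Fin n => k < (i:ℕ))) := by
    ext i
    simp only [Finset.mem_filter, Finset.mem_univ, true_and, Finset.mem_insert, Fin.ext_iff]
    omega
  have hPlekEq : Plek = (A ⟨k, hk⟩).card * Plt := by
    rw [hPlek, hins, Finset.prod_insert (by simp)]
  have hNZlow : c * Plt ≤ NZc := by
    rw [hPltIte]
    exact le_trans hMIN hprodF
  -- pass to ℤ
  have e1 : ∏ i, ((A i).card : ℤ) = ((∏ i, (A i).card : ℕ) : ℤ) := by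
    push_cast; rfl
  have e2 : ∏ i ∈ Finset.univ.filter (fun i : Fin n => k ≤ (i:ℕ)), ((A i).card : ℤ)
      = ((Plek : ℕ) : ℤ) := by
    rw [hPlek]; push_cast; rfl
  have e3 : ∏ i ∈ Finset.univ.filter (fun i : Fin n => k < (i:ℕ)), ((A i).card : ℤ)
      = ((Plt : ℕ) : ℤ) := by
    rw [hPlt]; push_cast; rfl
  rw [e1, e2, e3]
  have hz1 : (Zc : ℤ) + (NZc : ℤ) = ((∏ i, (A i).card : ℕ) : ℤ) := by exact_mod_cast hsplit
  have hz2 : ((A ⟨k, hk⟩).card : ℤ) * (Plt : ℤ) - (ℓ : ℤ) * (Plt : ℤ) ≤ (NZc : ℤ) := by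
    have hcz : (c : ℤ) = ((A ⟨k, hk⟩).card : ℤ) - (ℓ : ℤ) := by
      rw [hc]; push_cast [Nat.cast_sub (by omega : ℓ ≤ (A ⟨k, hk⟩).card)]; ring
    have h1 : (c : ℤ) * (Plt : ℤ) ≤ (NZc : ℤ) := by exact_mod_cast hNZlow
    rw [hcz, sub_mul] at h1
    exact h1
  have hz3 : ((Plek : ℕ) : ℤ) = ((A ⟨k, hk⟩).card : ℤ) * (Plt : ℤ) := by
    exact_mod_cast hPlekEq
  linarith
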